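/- Let R be a measurable subset of the open unit disc {z ∈ ℂ : |z| < 1}, let ε > 0, and let G := {(z₁,z₂) ∈ ℂ² : z₂ ∈ R, |z₁| ≤ √(1−|z₂|²)·tanh(ε/2)}. Then, as an equality of Lebesgue integrals (with values in [0,∞]), ∫_G 16/(1 − |z₁|² − |z₂|²)³ d(z₁,z₂) = 2π·(cosh⁴(ε/2) − 1) · ∫_R 4/(1−|z|²)² dz. In words: the complex hyperbolic volume of the tubular neighborhood of width ε of a region R in a complex line equals 2π(cosh⁴(ε/2) − 1) times the hyperbolic area of R. -/

import Mathlib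

open Complex Real MeasureTheory ENNReal

/-- The complex hyperbolic volume of the tubular neighborhood of width `ε` of a region
`R` in a complex line equals `2π(cosh⁴(ε/2) − 1)` times the hyperbolic area of `R`. -/

lemma radial_ftc (a rm : ℝ) (ha : 0 < a) (hrm : 0 ≤ rm) (hrm2 : rm ^ 2 < a) :
    ∫ r in Set.Ioc (0:ℝ) rm, 16 * r / (a - r ^ 2) ^ 3 =
      4 / (a - rm ^ 2) ^ 2 - 4 / a ^ 2 := by
  rw [← intervalIntegral.integral_of_le hrm]
  have key : ∀ r ∈ Set.uIcc (0:ℝ) rm,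
      HasDerivAt (fun r => 4 / (a - r ^ 2) ^ 2) (16 * r / (a - r ^ 2) ^ 3) r := by
    intro r hr
    rw [Set.uIcc_of_le hrm] at hr
    have hr2 : r ^ 2 < a := lt_of_le_of_lt (by nlinarith [hr.1, hr.2] : r ^ 2 ≤ rm ^ 2) hrm2
    have hne : a - r ^ 2 ≠ 0 := by nlinarith
    have h1 : HasDerivAt (fun r : ℝ => a - r ^ 2) (-(2 * r)) r := by
      simpa using ((hasDerivAt_pow 2 r).const_sub a)
    have h2 : HasDerivAt (fun r : ℝ => (a - r ^ 2) ^ 2) (2 * (a - r ^ 2) ^ 1 * (-(2 * r))) r :=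
      h1.pow 2
    have h3 := (h2.inv (pow_ne_zero 2 hne)).const_mul 4
    have heq : (fun r : ℝ => 4 / (a - r ^ 2) ^ 2) = fun r => 4 * ((a - r ^ 2) ^ 2)⁻¹ := by
      funext x; rw [div_eq_mul_inv]
    rw [heq]
    refine h3.congr_deriv ?_
    field_simp
    ring
  have := intervalIntegral.integral_eq_sub_of_hasDerivAt key ?_
  · rw [this]; norm_num
  · apply ContinuousOn.intervalIntegrable
    apply ContinuousOn.div (by fun_prop) (by fun_prop)
    intro r hr
    rw [Set.uIcc_of_le hrm] at hr
    have hr2 : r ^ 2 < a := lt_of_le_of_lt (by nlinarith [hr.1, hr.2] : r ^ 2 ≤ rm ^ 2) hrm2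
    exact pow_ne_zero _ (by nlinarith)

lemma disk_integral (a t : ℝ) (ha : 0 < a) (ht0 : 0 ≤ t) (ht1 : t < 1) :
    ∫⁻ z : ℂ in Metric.closedBall 0 (Real.sqrt a * t),
      ENNReal.ofReal (16 / (a - ‖z‖ ^ 2) ^ 3) =
      ENNReal.ofReal (2 * π * (1 / (1 - t ^ 2) ^ 2 - 1) * (4 / a ^ 2)) := by
  set rm := Real.sqrt a * t with hrm_def
  have hrm : 0 ≤ rm := mul_nonneg (Real.sqrt_nonneg a) ht0
  have hrmsq : rm ^ 2 = a * t ^ 2 := by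
    rw [hrm_def, mul_pow, Real.sq_sqrt ha.le]
  have ht2 : t ^ 2 < 1 := by nlinarith
  have hrm2 : rm ^ 2 < a := by rw [hrmsq]; nlinarith
  have hball : ∀ z : ℂ, z ∈ Metric.closedBall (0:ℂ) rm → ‖z‖ ^ 2 ≤ rm ^ 2 := by
    intro z hz
    rw [Metric.mem_closedBall, dist_zero_right] at hz
    exact pow_le_pow_left₀ (norm_nonneg z) hz 2
  have hcont : ContinuousOn (fun z : ℂ => 16 / (a - ‖z‖ ^ 2) ^ 3)
      (Metric.closedBall 0 rm) := by
    apply ContinuousOn.div continuousOn_const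
      ((continuous_const.sub (continuous_norm.pow 2)).pow 3).continuousOn
    intro z hz
    exact pow_ne_zero _ (by simp only [Pi.sub_apply, Pi.pow_apply]; nlinarith [hball z hz])
  have hint : IntegrableOn (fun z : ℂ => 16 / (a - ‖z‖ ^ 2) ^ 3)
      (Metric.closedBall 0 rm) :=
    hcont.integrableOn_compact (isCompact_closedBall 0 rm)
  have hnn : 0 ≤ᵐ[volume.restrict (Metric.closedBall (0:ℂ) rm)]
      fun z : ℂ => 16 / (a - ‖z‖ ^ 2) ^ 3 := by
    rw [Filter.EventuallyLE, ae_restrict_iff' measurableSet_closedBall]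
    refine ae_of_all _ fun z hz => ?_
    have : 0 < a - ‖z‖ ^ 2 := by nlinarith [hball z hz]
    positivity
  rw [← ofReal_integral_eq_lintegral_ofReal hint hnn]
  congr 1
  rw [← integral_indicator measurableSet_closedBall,
    ← Complex.integral_comp_polarCoord_symm]
  have hEq : ∀ p ∈ polarCoord.target,
      p.1 • (Metric.closedBall (0:ℂ) rm).indicator
          (fun z : ℂ => 16 / (a - ‖z‖ ^ 2) ^ 3) (Complex.polarCoord.symm p)
        = (Set.Iic rm).indicator (fun r : ℝ => r * (16 / (a - r ^ 2) ^ 3)) p.1 * 1 := by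
    classical
    intro p hp
    have hp1 : 0 < p.1 := hp.1
    have habs : ‖Complex.polarCoord.symm p‖ = p.1 := by
      rw [Complex.norm_polarCoord_symm, abs_of_pos hp1]
    rw [mul_one, Set.indicator_apply, Set.indicator_apply, Metric.mem_closedBall,
      dist_zero_right]
    simp only [habs, Set.mem_Iic]
    split_ifs with h
    · simp [smul_eq_mul]
    · simp
  rw [setIntegral_congr_fun (polarCoord.open_target.measurableSet) hEq]
  have htarget : polarCoord.target = Set.Ioi (0:ℝ) ×ˢ Set.Ioo (-π) π := rfl
  rw [htarget, Measure.volume_eq_prod, ← Measure.prod_restrict,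
    MeasureTheory.integral_prod_mul (fun r : ℝ => (Set.Iic rm).indicator
      (fun r : ℝ => r * (16 / (a - r ^ 2) ^ 3)) r) (fun _ : ℝ => (1:ℝ))]
  rw [MeasureTheory.setIntegral_indicator measurableSet_Iic, Set.Ioi_inter_Iic,
    MeasureTheory.setIntegral_const, smul_eq_mul, mul_one, measureReal_def, Real.volume_Ioo]
  have hcongr : ∫ r in Set.Ioc (0:ℝ) rm, r * (16 / (a - r ^ 2) ^ 3)
      = ∫ r in Set.Ioc (0:ℝ) rm, 16 * r / (a - r ^ 2) ^ 3 := by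
    apply integral_congr_ae
    refine ae_of_all _ fun r => ?_
    ring
  rw [hcongr, radial_ftc a rm ha hrm hrm2, ENNReal.toReal_ofReal (by linarith [Real.pi_pos])]
  have h1t : (1:ℝ) - t ^ 2 ≠ 0 := by nlinarith
  have harm : a - rm ^ 2 = a * (1 - t ^ 2) := by rw [hrmsq]; ring
  rw [harm]
  field_simp
  ring

theorem volume_of_tubular_neighborhood
    (R : Set ℂ) (hR : MeasurableSet R) (hR1 : R ⊆ {z : ℂ | ‖z‖ < 1})
    (ε : ℝ) (hε : 0 < ε)
    (G : Set (ℂ × ℂ))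
    (hG : G = {p : ℂ × ℂ | p.2 ∈ R ∧
      ‖p.1‖ ≤ Real.sqrt (1 - ‖p.2‖ ^ 2) * Real.tanh (ε / 2)}) :
    ∫⁻ p in G, ENNReal.ofReal
        (16 / (1 - ‖p.1‖ ^ 2 - ‖p.2‖ ^ 2) ^ 3) ∂volume
      = ENNReal.ofReal (2 * Real.pi * (Real.cosh (ε / 2) ^ 4 - 1)) *
        ∫⁻ z in R, ENNReal.ofReal (4 / (1 - ‖z‖ ^ 2) ^ 2) ∂volume := by
  classical
  subst hG
  set t : ℝ := Real.tanh (ε / 2) with ht_def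
  have hc : (0:ℝ) < Real.cosh (ε / 2) := Real.cosh_pos _
  have hs : (0:ℝ) ≤ Real.sinh (ε / 2) := by
    have := Real.sinh_nonneg_iff.2 (by linarith : (0:ℝ) ≤ ε / 2)
    linarith
  have hsc : Real.sinh (ε / 2) < Real.cosh (ε / 2) := by
    have := Real.exp_pos (-(ε / 2))
    nlinarith [Real.cosh_sub_sinh (ε / 2)]
  have ht0 : 0 ≤ t := by
    rw [ht_def, Real.tanh_eq_sinh_div_cosh]
    positivity
  have ht1 : t < 1 := by
    rw [ht_def, Real.tanh_eq_sinh_div_cosh, div_lt_one hc]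
    exact hsc
  have hkey : 1 - t ^ 2 = 1 / Real.cosh (ε / 2) ^ 2 := by
    rw [ht_def, Real.tanh_eq_sinh_div_cosh]
    have h := Real.cosh_sq_sub_sinh_sq (ε / 2)
    field_simp
    linarith
  have hC : 1 / (1 - t ^ 2) ^ 2 - 1 = Real.cosh (ε / 2) ^ 4 - 1 := by
    rw [hkey]
    field_simp
  -- measurability
  have hfm : Measurable (fun p : ℂ × ℂ => ENNReal.ofReal
      (16 / (1 - ‖p.1‖ ^ 2 - ‖p.2‖ ^ 2) ^ 3)) := by
    apply ENNReal.measurable_ofReal.comp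
    apply Measurable.div measurable_const
    apply Measurable.pow _ measurable_const
    exact ((measurable_const.sub
      (((continuous_norm.comp continuous_fst).measurable).pow measurable_const)).sub
      (((continuous_norm.comp continuous_snd).measurable).pow measurable_const))
  set G : Set (ℂ × ℂ) := {p : ℂ × ℂ | p.2 ∈ R ∧
      ‖p.1‖ ≤ Real.sqrt (1 - ‖p.2‖ ^ 2) * t} with hG_def
  have hGm : MeasurableSet G := by
    have hGeq : G = {p : ℂ × ℂ | p.2 ∈ R} ∩
        {p : ℂ × ℂ | ‖p.1‖ ≤ Real.sqrt (1 - ‖p.2‖ ^ 2) * t} := rfl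
    rw [hGeq]
    apply MeasurableSet.inter
    · exact measurable_snd hR
    · apply measurableSet_le
      · exact (continuous_norm.comp continuous_fst).measurable
      · apply Measurable.mul _ measurable_const
        apply (Real.continuous_sqrt.measurable).comp
        exact measurable_const.sub
          (((continuous_norm.comp continuous_snd).measurable).pow measurable_const)
  rw [← lintegral_indicator hGm, Measure.volume_eq_prod,
    lintegral_prod_symm' _ (hfm.indicator hGm)]
  have hfiber : ∀ y : ℂ, (∫⁻ x : ℂ, G.indicator (fun p : ℂ × ℂ => ENNReal.ofReal
        (16 / (1 - ‖p.1‖ ^ 2 - ‖p.2‖ ^ 2) ^ 3)) (x, y) ∂volume)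
      = R.indicator (fun y : ℂ => ENNReal.ofReal (2 * π * (1 / (1 - t ^ 2) ^ 2 - 1) *
          (4 / (1 - ‖y‖ ^ 2) ^ 2))) y := by
    intro y
    by_cases hy : y ∈ R
    · have ha : (0:ℝ) < 1 - ‖y‖ ^ 2 := by
        have := hR1 hy
        simp only [Set.mem_setOf_eq] at this
        nlinarith [norm_nonneg y]
      rw [Set.indicator_of_mem hy]
      have hpt : ∀ x : ℂ, G.indicator (fun p : ℂ × ℂ => ENNReal.ofReal
          (16 / (1 - ‖p.1‖ ^ 2 - ‖p.2‖ ^ 2) ^ 3)) (x, y)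
          = (Metric.closedBall (0:ℂ) (Real.sqrt (1 - ‖y‖ ^ 2) * t)).indicator
            (fun x : ℂ => ENNReal.ofReal
              (16 / ((1 - ‖y‖ ^ 2) - ‖x‖ ^ 2) ^ 3)) x := by
        intro x
        rw [Set.indicator_apply, Set.indicator_apply]
        have hmem : (x, y) ∈ G ↔ x ∈ Metric.closedBall (0:ℂ)
            (Real.sqrt (1 - ‖y‖ ^ 2) * t) := by
          simp only [hG_def, Set.mem_setOf_eq, Metric.mem_closedBall, dist_zero_right,
            hy, true_and]
        have harg : 1 - ‖x‖ ^ 2 - ‖y‖ ^ 2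
            = (1 - ‖y‖ ^ 2) - ‖x‖ ^ 2 := by ring
        rw [harg]
        split_ifs with h1 h2 h2
        · rfl
        · exact absurd (hmem.1 h1) h2
        · exact absurd (hmem.2 h2) h1
        · rfl
      simp_rw [hpt]
      rw [lintegral_indicator measurableSet_closedBall]
      exact disk_integral (1 - ‖y‖ ^ 2) t ha ht0 ht1
    · rw [Set.indicator_of_notMem hy]
      have hpt : ∀ x : ℂ, G.indicator (fun p : ℂ × ℂ => ENNReal.ofReal
          (16 / (1 - ‖p.1‖ ^ 2 - ‖p.2‖ ^ 2) ^ 3)) (x, y) = 0 := by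
        intro x
        apply Set.indicator_of_notMem
        simp only [hG_def, Set.mem_setOf_eq]
        tauto
      simp_rw [hpt]
      exact lintegral_zero
  rw [lintegral_congr hfiber, lintegral_indicator hR]
  have hCnn : (0:ℝ) ≤ 2 * π * (Real.cosh (ε / 2) ^ 4 - 1) := by
    have h1 := Real.one_le_cosh (ε / 2)
    have h4 : (1:ℝ) ≤ Real.cosh (ε / 2) ^ 4 := one_le_pow₀ h1
    have hpi := Real.pi_pos
    have : (0:ℝ) ≤ Real.cosh (ε / 2) ^ 4 - 1 := by linarith
    positivity
  have hpt2 : ∀ y : ℂ, ENNReal.ofReal (2 * π * (1 / (1 - t ^ 2) ^ 2 - 1) *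
      (4 / (1 - ‖y‖ ^ 2) ^ 2))
      = ENNReal.ofReal (2 * π * (Real.cosh (ε / 2) ^ 4 - 1)) *
        ENNReal.ofReal (4 / (1 - ‖y‖ ^ 2) ^ 2) := by
    intro y
    rw [hC, ← ENNReal.ofReal_mul hCnn]
  simp_rw [hpt2]
  rw [lintegral_const_mul]
  apply ENNReal.measurable_ofReal.comp
  apply Measurable.div measurable_const
  exact (measurable_const.sub
    ((continuous_norm.measurable).pow measurable_const)).pow measurable_const
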